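/- arXiv:1604.06615 — 4 statements merged into one kernel-verified Lean document; each statement's English description precedes it below -/
import Mathlib

section
/- For any unit norm frame of M vectors in R^m with M > m, the coherence (maximum absolute inner product between distinct vectors) is at least sqrt((M-m)/(m(M-1))). -/
open Matrix BigOperators Finset

noncomputable def coherence {m M : ℕ} (φ : Fin M → (Fin m → ℝ)) : ℝ :=
  sSup {r : ℝ | ∃ i j : Fin M, i ≠ j ∧ r = |∑ k, φ i k * φ j k|}

/-- Welch bound: any unit-norm frame of `M > m` vectors spanning `ℝ^m` has
coherence at least `√((M-m)/(m(M-1)))`. -/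
theorem welch_bound {m M : ℕ} (hm : 0 < m) (hMm : m < M)
    (φ : Fin M → (Fin m → ℝ))
    (hunit : ∀ i, ∑ k, φ i k * φ i k = 1)
    (hspan : Submodule.span ℝ (Set.range φ) = ⊤) :
    Real.sqrt (((M : ℝ) - m) / (m * ((M : ℝ) - 1))) ≤ coherence φ := by
  have hM2 : 2 ≤ M := by omega
  set μ := coherence φ with hμdef
  have hfin : {r : ℝ | ∃ i j : Fin M, i ≠ j ∧ r = |∑ k, φ i k * φ j k|}.Finite := by
    have hsub : {r : ℝ | ∃ i j : Fin M, i ≠ j ∧ r = |∑ k, φ i k * φ j k|} ⊆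
        Set.range (fun p : Fin M × Fin M => |∑ k, φ p.1 k * φ p.2 k|) := by
      rintro r ⟨i, j, _, rfl⟩; exact ⟨(i, j), rfl⟩
    exact (Set.finite_range _).subset hsub
  have hle : ∀ i j : Fin M, i ≠ j → |∑ k, φ i k * φ j k| ≤ μ := fun i j hij =>
    le_csSup hfin.bddAbove ⟨i, j, hij, rfl⟩
  have hμ0 : 0 ≤ μ := by
    refine le_trans (abs_nonneg (∑ k, φ (⟨0, by omega⟩ : Fin M) k * φ ⟨1, by omega⟩ k))
      (hle _ _ ?_)
    simp [Fin.ext_iff]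
  -- the Gram-type matrix of coordinates
  set T : Fin m → Fin m → ℝ := fun k l => ∑ i, φ i k * φ i l with hT
  -- total sum of squared inner products
  set A : ℝ := ∑ i, ∑ j, (∑ k, φ i k * φ j k) ^ 2 with hA
  have hA_eq : A = ∑ k, ∑ l, (T k l) ^ 2 := by
    rw [hA]
    have : ∀ i j : Fin M, (∑ k, φ i k * φ j k) ^ 2
        = ∑ k, ∑ l, (φ i k * φ i l) * (φ j k * φ j l) := by
      intro i j
      rw [sq, Finset.sum_mul_sum]
      exact Finset.sum_congr rfl fun k _ => Finset.sum_congr rfl fun l _ => by ring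
    simp only [this]
    calc ∑ i, ∑ j, ∑ k, ∑ l, (φ i k * φ i l) * (φ j k * φ j l)
        = ∑ i, ∑ k, ∑ j, ∑ l, (φ i k * φ i l) * (φ j k * φ j l) :=
          Finset.sum_congr rfl fun i _ => Finset.sum_comm
      _ = ∑ i, ∑ k, ∑ l, ∑ j, (φ i k * φ i l) * (φ j k * φ j l) :=
          Finset.sum_congr rfl fun i _ => Finset.sum_congr rfl fun k _ =>
            Finset.sum_comm
      _ = ∑ k, ∑ i, ∑ l, ∑ j, (φ i k * φ i l) * (φ j k * φ j l) :=
          Finset.sum_comm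
      _ = ∑ k, ∑ l, ∑ i, ∑ j, (φ i k * φ i l) * (φ j k * φ j l) :=
          Finset.sum_congr rfl fun k _ => Finset.sum_comm
      _ = ∑ k, ∑ l, (T k l) ^ 2 := by
          refine Finset.sum_congr rfl fun k _ => Finset.sum_congr rfl fun l _ => ?_
          rw [sq, Finset.sum_mul_sum]
  have htrace : ∑ k, T k k = (M : ℝ) := by
    simp only [hT]
    rw [Finset.sum_comm]
    simp [hunit]
  have hdiag : ∑ k, (T k k) ^ 2 ≤ ∑ k, ∑ l, (T k l) ^ 2 := by
    refine Finset.sum_le_sum fun k _ => ?_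
    exact Finset.single_le_sum (fun l _ => sq_nonneg (T k l)) (Finset.mem_univ k)
  have hCS : ((M : ℝ)) ^ 2 ≤ (m : ℝ) * ∑ k, (T k k) ^ 2 := by
    have := sq_sum_le_card_mul_sum_sq (s := (Finset.univ : Finset (Fin m)))
      (f := fun k => T k k)
    simpa [htrace] using this
  have hAlow : ((M : ℝ)) ^ 2 / m ≤ A := by
    rw [div_le_iff₀ (by exact_mod_cast hm)]
    rw [hA_eq]
    calc ((M : ℝ)) ^ 2 ≤ (m : ℝ) * ∑ k, (T k k) ^ 2 := hCS
      _ ≤ (m : ℝ) * ∑ k, ∑ l, (T k l) ^ 2 :=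
        mul_le_mul_of_nonneg_left hdiag (by positivity)
      _ = (∑ k, ∑ l, (T k l) ^ 2) * m := by ring
  have hAup : A ≤ (M : ℝ) * (1 + ((M : ℝ) - 1) * μ ^ 2) := by
    rw [hA]
    have hrow : ∀ i : Fin M, ∑ j, (∑ k, φ i k * φ j k) ^ 2
        ≤ 1 + ((M : ℝ) - 1) * μ ^ 2 := by
      intro i
      rw [← Finset.add_sum_erase _ _ (Finset.mem_univ i), hunit i, one_pow]
      refine add_le_add_right ?_ 1
      have : ∑ j ∈ Finset.univ.erase i, (∑ k, φ i k * φ j k) ^ 2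
          ≤ (Finset.univ.erase i).card • (μ ^ 2) := by
        refine Finset.sum_le_card_nsmul _ _ _ fun j hj => ?_
        have hij : i ≠ j := (Finset.ne_of_mem_erase hj).symm
        have := hle i j hij
        calc (∑ k, φ i k * φ j k) ^ 2 = |∑ k, φ i k * φ j k| ^ 2 := (sq_abs _).symm
          _ ≤ μ ^ 2 := pow_le_pow_left₀ (abs_nonneg _) this 2
      simpa [Finset.card_erase_of_mem, mul_comm, Nat.cast_sub (by omega : 1 ≤ M)]
        using this
    calc ∑ i, ∑ j, (∑ k, φ i k * φ j k) ^ 2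
        ≤ ∑ _i : Fin M, (1 + ((M : ℝ) - 1) * μ ^ 2) := Finset.sum_le_sum fun i _ => hrow i
      _ = (M : ℝ) * (1 + ((M : ℝ) - 1) * μ ^ 2) := by
          rw [Finset.sum_const, Finset.card_univ, Fintype.card_fin, nsmul_eq_mul]
  have hkey : ((M : ℝ) - m) / (m * ((M : ℝ) - 1)) ≤ μ ^ 2 := by
    have hmpos : (0 : ℝ) < m := by exact_mod_cast hm
    have hMpos : (0 : ℝ) < M := by positivity
    have hM1pos : (0 : ℝ) < (M : ℝ) - 1 := by
      have : (1 : ℝ) < M := by exact_mod_cast (by omega : 1 < M)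
      linarith
    rw [div_le_iff₀ (by positivity)]
    have h2 : ((M : ℝ)) ^ 2 ≤ m * ((M : ℝ) * (1 + ((M : ℝ) - 1) * μ ^ 2)) := by
      have := hAlow.trans hAup
      rw [div_le_iff₀ hmpos] at this
      linarith
    nlinarith [sq_nonneg μ, mul_pos hmpos hMpos]
  calc Real.sqrt (((M : ℝ) - m) / (m * ((M : ℝ) - 1)))
      ≤ Real.sqrt (μ ^ 2) := Real.sqrt_le_sqrt hkey
    _ = μ := by rw [Real.sqrt_sq hμ0]
end

section
/- Let Φ be a unit norm frame in R^m and G an invertible m×m matrix. Let {e_j} be an orthonormal eigenbasis of GᵀG with eigenvalues λ_j. Then ‖Gφᵢ‖₂ = 1 for all i if and only if the vector (λ₁−1, …, λ_m−1) is orthogonal to the span of the vectors (|⟨φᵢ, e₁⟩|², …, |⟨φᵢ, e_m⟩|²) for i = 1,…,M. -/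
open Matrix BigOperators Finset

/-- Characterization of preconditioners preserving unit norms: `‖Gφᵢ‖ = 1` for
all `i` iff `(λ₁-1,…,λ_m-1)` is orthogonal to the span of the vectors of squared
coordinates of the `φᵢ` in the eigenbasis of `GᵀG`. -/
theorem unit_norm_preserving_characterization {m M : ℕ}
    (Φ : Matrix (Fin m) (Fin M) ℝ)
    (hunit : ∀ i, ∑ k, Φ k i * Φ k i = 1)
    (G : Matrix (Fin m) (Fin m) ℝ) (hG : IsUnit G)
    (e : Fin m → (Fin m → ℝ)) (lam : Fin m → ℝ)
    (horth : ∀ j j' : Fin m, e j ⬝ᵥ e j' = if j = j' then 1 else 0)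
    (heig : ∀ j, (Gᵀ * G).mulVec (e j) = lam j • e j) :
    (∀ i, ∑ k, (G * Φ) k i * (G * Φ) k i = 1) ↔
      ∀ v ∈ Submodule.span ℝ
          (Set.range fun i : Fin M => fun j : Fin m => ((fun k => Φ k i) ⬝ᵥ e j) ^ 2),
        ∑ j, (lam j - 1) * v j = 0 := by
  set E : Matrix (Fin m) (Fin m) ℝ := Matrix.of (fun j k => e j k) with hE
  have hEEt : E * Eᵀ = 1 := by
    ext j j'
    simpa [Matrix.mul_apply, Matrix.one_apply, dotProduct, hE] using horth j j'
  have hEtE : Eᵀ * E = 1 := mul_eq_one_comm.mp hEEt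
  -- coordinate expansion of any vector in the eigenbasis
  have hexp : ∀ x : Fin m → ℝ, x = ∑ j, (x ⬝ᵥ e j) • e j := by
    intro x; funext k
    have h1 : (∑ j, (x ⬝ᵥ e j) • e j) k = ∑ l, x l * (Eᵀ * E) l k := by
      simp only [Finset.sum_apply, Pi.smul_apply, smul_eq_mul, dotProduct,
        Matrix.mul_apply, Finset.sum_mul, Finset.mul_sum, hE, Matrix.transpose_apply,
        Matrix.of_apply]
      rw [Finset.sum_comm]
      exact Finset.sum_congr rfl fun l _ => Finset.sum_congr rfl fun j _ => by ring
    rw [h1, hEtE]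
    simp [Matrix.one_apply]
  have hdot : ∀ (f : Fin m → ℝ) (y : Fin m → ℝ),
      y ⬝ᵥ (∑ j, f j • e j) = ∑ j, f j * (y ⬝ᵥ e j) := by
    intro f y
    simp only [dotProduct, Finset.sum_apply, Pi.smul_apply, smul_eq_mul,
      Finset.mul_sum]
    rw [Finset.sum_comm]
    exact Finset.sum_congr rfl fun j _ =>
      Finset.sum_congr rfl fun k _ => by ring
  -- quadratic-form expansion for a matrix with eigenbasis e
  have key : ∀ (A : Matrix (Fin m) (Fin m) ℝ) (mu : Fin m → ℝ),
      (∀ j, A.mulVec (e j) = mu j • e j) →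
      ∀ x : Fin m → ℝ, x ⬝ᵥ A.mulVec x = ∑ j, mu j * (x ⬝ᵥ e j) ^ 2 := by
    intro A mu hA x
    have h1 : A.mulVec x = ∑ j, ((x ⬝ᵥ e j) * mu j) • e j := by
      conv_lhs => rw [hexp x, ← Matrix.mulVecLin_apply, map_sum]
      exact Finset.sum_congr rfl fun j _ => by
        rw [Matrix.mulVecLin_apply, Matrix.mulVec_smul, hA, smul_smul]
    rw [h1, hdot]
    exact Finset.sum_congr rfl fun j _ => by ring
  -- squared norm = sum of squared coordinates
  have hnorm : ∀ x : Fin m → ℝ, x ⬝ᵥ x = ∑ j, (x ⬝ᵥ e j) ^ 2 := by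
    intro x
    have := key 1 (fun _ => 1) (fun j => by simp) x
    simpa using this
  -- ‖Gφᵢ‖² in eigen-coordinates
  have hGnorm : ∀ i, ∑ k, (G * Φ) k i * (G * Φ) k i
      = ∑ j, lam j * ((fun k => Φ k i) ⬝ᵥ e j) ^ 2 := by
    intro i
    set φ : Fin m → ℝ := fun k => Φ k i with hφ
    have h1 : ∀ k, (G * Φ) k i = G.mulVec φ k := by
      intro k; simp [Matrix.mul_apply, Matrix.mulVec, dotProduct, hφ]
    have h2 : ∑ k, (G * Φ) k i * (G * Φ) k i = G.mulVec φ ⬝ᵥ G.mulVec φ := by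
      simp only [dotProduct, h1]
    rw [h2]
    have h3 : G.mulVec φ ⬝ᵥ G.mulVec φ = φ ⬝ᵥ (Gᵀ * G).mulVec φ := by
      rw [← Matrix.mulVec_mulVec, Matrix.dotProduct_mulVec φ Gᵀ,
        Matrix.vecMul_transpose]
    rw [h3, key (Gᵀ * G) lam heig φ]
  -- unit coordinates sum
  have hone : ∀ i, ∑ j, ((fun k => Φ k i) ⬝ᵥ e j) ^ 2 = 1 := by
    intro i
    rw [← hnorm]
    simpa [dotProduct] using hunit i
  constructor
  · intro h v hv
    induction hv using Submodule.span_induction with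
    | mem v hv =>
        obtain ⟨i, rfl⟩ := hv
        have h1 := hGnorm i
        rw [h i] at h1
        have h2 := hone i
        simp only [sub_mul, one_mul, Finset.sum_sub_distrib]
        rw [← h1, h2]
        ring
    | zero => simp
    | add u w _ _ hu hw =>
        simp only [Pi.add_apply, mul_add, Finset.sum_add_distrib, hu, hw, add_zero]
    | smul c u _ hu =>
        simp only [Pi.smul_apply, smul_eq_mul]
        have : ∑ x, (lam x - 1) * (c * u x) = c * ∑ x, (lam x - 1) * u x := by
          rw [Finset.mul_sum]; exact Finset.sum_congr rfl fun x _ => by ring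
        rw [this, hu, mul_zero]
  · intro h i
    have hv := h _ (Submodule.subset_span ⟨i, rfl⟩)
    simp only [sub_mul, one_mul, Finset.sum_sub_distrib, sub_eq_zero] at hv
    rw [hGnorm i, hv]; exact hone i
end

section
/- For any m×M real matrix Φ with unit norm columns, the frame potential FP(Φ) = Σ_{i,j} |⟨φᵢ, φⱼ⟩|² = ‖ΦᵀΦ‖_F² satisfies FP(Φ) ≥ M²/m, with equality if and only if Φ is a unit norm tight frame (i.e., ΦΦᵀ = (M/m)·I_m). -/
open Matrix BigOperators Finset

lemma fp_swap {m M : ℕ} (f : Fin m → Fin M → ℝ) :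
    ∑ i : Fin M, ∑ j : Fin M, (∑ k, f k i * f k j) ^ 2
      = ∑ k : Fin m, ∑ l : Fin m, (∑ i, f k i * f l i) ^ 2 := by
  have e1 : ∀ (n : ℕ) (g : Fin n → ℝ), (∑ x, g x) ^ 2 = ∑ x, ∑ y, g x * g y := by
    intro n g; rw [sq, Finset.sum_mul_sum]
  simp only [e1, Finset.mul_sum, Finset.sum_mul]
  calc ∑ i : Fin M, ∑ j : Fin M, ∑ k : Fin m, ∑ l : Fin m, f k i * f k j * (f l i * f l j)
      = ∑ i : Fin M, ∑ k : Fin m, ∑ j : Fin M, ∑ l : Fin m, f k i * f k j * (f l i * f l j) :=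
        Finset.sum_congr rfl fun i _ => Finset.sum_comm
    _ = ∑ k : Fin m, ∑ i : Fin M, ∑ j : Fin M, ∑ l : Fin m, f k i * f k j * (f l i * f l j) :=
        Finset.sum_comm
    _ = ∑ k : Fin m, ∑ i : Fin M, ∑ l : Fin m, ∑ j : Fin M, f k i * f k j * (f l i * f l j) :=
        Finset.sum_congr rfl fun k _ => Finset.sum_congr rfl fun i _ => Finset.sum_comm
    _ = ∑ k : Fin m, ∑ l : Fin m, ∑ i : Fin M, ∑ j : Fin M, f k i * f k j * (f l i * f l j) :=
        Finset.sum_congr rfl fun k _ => Finset.sum_comm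
    _ = ∑ k : Fin m, ∑ l : Fin m, ∑ i : Fin M, ∑ j : Fin M, f k i * f l i * (f k j * f l j) := by
        refine Finset.sum_congr rfl fun k _ => Finset.sum_congr rfl fun l _ =>
          Finset.sum_congr rfl fun i _ => Finset.sum_congr rfl fun j _ => by ring

/-- Frame potential bound: `FP(Φ) ≥ M²/m`, with equality iff `Φ` is a unit norm
tight frame. -/
theorem frame_potential_bound {m M : ℕ} (hm : 0 < m) (hmM : m ≤ M)
    (Φ : Matrix (Fin m) (Fin M) ℝ)
    (hunit : ∀ i, ∑ k, Φ k i * Φ k i = 1) :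
    ((M : ℝ) ^ 2 / m ≤ ∑ i : Fin M, ∑ j : Fin M, (∑ k, Φ k i * Φ k j) ^ 2) ∧
    ((∑ i : Fin M, ∑ j : Fin M, (∑ k, Φ k i * Φ k j) ^ 2 = (M : ℝ) ^ 2 / m) ↔
      Φ * Φᵀ = ((M : ℝ) / m) • (1 : Matrix (Fin m) (Fin m) ℝ)) := by
  have hm' : (0 : ℝ) < m := by exact_mod_cast hm
  set c : ℝ := (M : ℝ) / m with hc
  set A : Fin m → Fin m → ℝ := fun k l => ∑ i, Φ k i * Φ l i with hA
  -- rewrite the frame potential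
  have hS : ∑ i : Fin M, ∑ j : Fin M, (∑ k, Φ k i * Φ k j) ^ 2
      = ∑ k : Fin m, ∑ l : Fin m, (A k l) ^ 2 := fp_swap Φ
  -- trace of A is M
  have htr : ∑ k : Fin m, A k k = (M : ℝ) := by
    simp only [hA]
    rw [Finset.sum_comm]
    simp [hunit]
  -- key identity
  have hkey : ∑ k : Fin m, ∑ l : Fin m, (A k l - if k = l then c else 0) ^ 2
      = (∑ k : Fin m, ∑ l : Fin m, (A k l) ^ 2) - (M : ℝ) ^ 2 / m := by
    have expand : ∀ k l : Fin m, (A k l - if k = l then c else 0) ^ 2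
        = (A k l) ^ 2 - 2 * c * (if k = l then A k l else 0)
          + (if k = l then c ^ 2 else 0) := by
      intro k l; by_cases h : k = l <;> simp [h] <;> ring
    simp only [expand, Finset.sum_add_distrib, Finset.sum_sub_distrib,
      ← Finset.mul_sum]
    have hd1 : ∑ k : Fin m, ∑ l : Fin m, (if k = l then A k l else 0) = ∑ k : Fin m, A k k := by
      simp
    have hd2 : ∑ k : Fin m, ∑ l : Fin m, (if k = l then c ^ 2 else 0) = m * c ^ 2 := by
      simp
    rw [hd1, hd2, htr]
    have hne : (m : ℝ) ≠ 0 := ne_of_gt hm'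
    rw [hc]
    field_simp
    ring
  have hnn : 0 ≤ ∑ k : Fin m, ∑ l : Fin m, (A k l - if k = l then c else 0) ^ 2 :=
    Finset.sum_nonneg fun k _ => Finset.sum_nonneg fun l _ => sq_nonneg _
  constructor
  · rw [hS]; linarith [hkey, hnn]
  · rw [hS]
    constructor
    · intro h
      have hz : ∑ k : Fin m, ∑ l : Fin m, (A k l - if k = l then c else 0) ^ 2 = 0 := by
        rw [hkey, h]; ring
      have hall : ∀ k l : Fin m, A k l = if k = l then c else 0 := by
        intro k l
        have h1 := (Finset.sum_eq_zero_iff_of_nonneg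
          (fun k _ => Finset.sum_nonneg fun l _ => sq_nonneg _)).mp hz k (Finset.mem_univ k)
        have h2 := (Finset.sum_eq_zero_iff_of_nonneg
          (fun l _ => sq_nonneg _)).mp h1 l (Finset.mem_univ l)
        have := pow_eq_zero_iff (n := 2) (by norm_num) |>.mp h2
        linarith [this]
      ext k l
      have := hall k l
      by_cases h' : k = l <;>
        simp [Matrix.mul_apply, Matrix.transpose_apply, Matrix.one_apply, h', hA] at this ⊢ <;>
        simpa [hA, h'] using this
    · intro h
      have hall : ∀ k l : Fin m, A k l = if k = l then c else 0 := by
        intro k l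
        have := congrFun (congrFun h k) l
        simp only [Matrix.mul_apply, Matrix.transpose_apply, Matrix.smul_apply,
          Matrix.one_apply, smul_eq_mul] at this
        by_cases h' : k = l <;> simp [h', hA, this] <;> simp [h'] at this <;> exact this
      have hz : ∑ k : Fin m, ∑ l : Fin m, (A k l - if k = l then c else 0) ^ 2 = 0 := by
        apply Finset.sum_eq_zero; intro k _
        apply Finset.sum_eq_zero; intro l _
        rw [hall k l]; ring
      rw [hkey] at hz
      linarith
end

section
/- Given a full-rank m×M matrix Ψ with SVD Ψ = UΣVᵀ, the matrix √α · U V' (where V' consists of the first m columns of V) equals √α (ΨΨᵀ)^{-1/2} Ψ and is an α-tight frame, i.e., its frame operator equals α·I_m. Moreover it minimizes ‖Ψ − T‖_F over all α-tight frames T. -/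
open Matrix BigOperators Finset

noncomputable def frob {m M : ℕ} (A : Matrix (Fin m) (Fin M) ℝ) : ℝ :=
  Real.sqrt (∑ i, ∑ j, (A i j) ^ 2)

/-- Nearest α-tight frame: for a full-rank `Ψ` with SVD `Ψ = U Σ Vᵀ`, the matrix
`√α · U V'ᵀ` (with `V'` the first `m` columns of `V`) equals `√α (ΨΨᵀ)^{-1/2} Ψ`,
is an `α`-tight frame, and minimizes the Frobenius distance to `Ψ` over all
`α`-tight frames. -/
theorem nearest_tight_frame {m M : ℕ} (hmM : m ≤ M)
    (Ψ : Matrix (Fin m) (Fin M) ℝ) (hrank : Ψ.rank = m)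
    (α : ℝ) (hα : 0 < α)
    (U : Matrix (Fin m) (Fin m) ℝ) (S : Matrix (Fin m) (Fin M) ℝ)
    (V : Matrix (Fin M) (Fin M) ℝ)
    (hU : Uᵀ * U = 1) (hV : Vᵀ * V = 1)
    (hS : ∀ (i : Fin m) (j : Fin M), (i : ℕ) ≠ (j : ℕ) → S i j = 0)
    (hSpos : ∀ (i : Fin m) (j : Fin M), (i : ℕ) = (j : ℕ) → 0 < S i j)
    (hSVD : Ψ = U * S * Vᵀ)
    (R : Matrix (Fin m) (Fin m) ℝ) (hRpd : R.PosDef)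
    (hR : R * R = (Ψ * Ψᵀ)⁻¹)
    (W : Matrix (Fin m) (Fin M) ℝ)
    (hW : ∀ (i : Fin m) (j : Fin M), W i j = V j (Fin.castLE hmM i)) :
    Real.sqrt α • (U * W) = Real.sqrt α • (R * Ψ) ∧
    (Real.sqrt α • (U * W)) * (Real.sqrt α • (U * W))ᵀ =
      α • (1 : Matrix (Fin m) (Fin m) ℝ) ∧
    (∀ T : Matrix (Fin m) (Fin M) ℝ, T * Tᵀ = α • (1 : Matrix (Fin m) (Fin m) ℝ) →
      frob (Ψ - Real.sqrt α • (U * W)) ≤ frob (Ψ - T)) := by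
  have hUU : U * Uᵀ = 1 := mul_eq_one_comm.mp hU
  have hVV : V * Vᵀ = 1 := mul_eq_one_comm.mp hV
  set κ : Fin m → Fin M := Fin.castLE hmM with hκ
  set σ : Fin m → ℝ := fun i => S i (κ i) with hσdef
  have hσ : ∀ i, 0 < σ i := fun i => hSpos _ _ (by simp [hκ])
  have hσne : ∀ i, σ i ≠ 0 := fun i => (hσ i).ne'
  -- S entries vanish off the "diagonal"
  have hSz : ∀ (i : Fin m) (k : Fin M), k ≠ κ i → S i k = 0 := by
    intro i k hk
    refine hS i k (fun hc => hk ?_)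
    apply Fin.ext
    simp [hκ, ← hc]
  -- W * Wᵀ = 1
  have hWW : W * Wᵀ = 1 := by
    ext i j
    have hvv := congrFun (congrFun hV (κ i)) (κ j)
    simp only [Matrix.mul_apply, Matrix.transpose_apply, Matrix.one_apply] at hvv ⊢
    simp only [hW]
    rw [hvv]
    by_cases h : i = j
    · simp [h]
    · rw [if_neg (fun hc => h (Fin.castLE_injective hmM hc)), if_neg h]
  -- S * Sᵀ = diagonal σ²
  have hSS : S * Sᵀ = Matrix.diagonal (fun i => σ i ^ 2) := by
    ext i j
    simp only [Matrix.mul_apply, Matrix.transpose_apply]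
    by_cases h : i = j
    · subst h
      rw [Matrix.diagonal_apply_eq]
      rw [Finset.sum_eq_single (κ i)]
      · rw [hσdef]; ring
      · intro k _ hk; rw [hSz i k hk, zero_mul]
      · simp
    · rw [Matrix.diagonal_apply_ne _ h]
      apply Finset.sum_eq_zero
      intro k _
      by_cases hk : k = κ i
      · rw [hSz j k (by rw [hk]; intro hc; exact h (Fin.castLE_injective hmM hc)), mul_zero]
      · rw [hSz i k hk, zero_mul]
  -- Ψ Ψᵀ
  have hΨΨ : Ψ * Ψᵀ = U * Matrix.diagonal (fun i => σ i ^ 2) * Uᵀ := by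
    rw [hSVD]
    rw [Matrix.transpose_mul, Matrix.transpose_mul, Matrix.transpose_transpose]
    calc U * S * Vᵀ * (V * (Sᵀ * Uᵀ)) = U * (S * ((Vᵀ * V) * (Sᵀ * Uᵀ))) := by
          simp only [Matrix.mul_assoc]
      _ = U * ((S * Sᵀ) * Uᵀ) := by rw [hV, Matrix.one_mul, Matrix.mul_assoc]
      _ = U * Matrix.diagonal (fun i => σ i ^ 2) * Uᵀ := by rw [hSS, Matrix.mul_assoc]
  -- the candidate square root
  set R₀ : Matrix (Fin m) (Fin m) ℝ := U * Matrix.diagonal (fun i => (σ i)⁻¹) * Uᵀ with hR₀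
  have hR₀psd : R₀.PosSemidef := by
    have := (Matrix.posSemidef_diagonal_iff.mpr
      (fun i => (inv_nonneg.mpr (hσ i).le : (0:ℝ) ≤ (σ i)⁻¹))).mul_mul_conjTranspose_same U
    simpa [hR₀] using this
  have hR₀sq : R₀ * R₀ = (Ψ * Ψᵀ)⁻¹ := by
    have hmul : R₀ * R₀ = U * Matrix.diagonal (fun i => ((σ i)⁻¹ * (σ i)⁻¹)) * Uᵀ := by
      rw [hR₀]
      calc U * Matrix.diagonal (fun i => (σ i)⁻¹) * Uᵀ *
            (U * Matrix.diagonal (fun i => (σ i)⁻¹) * Uᵀ)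
          = U * (Matrix.diagonal (fun i => (σ i)⁻¹) * ((Uᵀ * U) *
              (Matrix.diagonal (fun i => (σ i)⁻¹) * Uᵀ))) := by simp only [Matrix.mul_assoc]
        _ = U * ((Matrix.diagonal (fun i => (σ i)⁻¹) *
              Matrix.diagonal (fun i => (σ i)⁻¹)) * Uᵀ) := by
              rw [hU, Matrix.one_mul, Matrix.mul_assoc]
        _ = _ := by rw [Matrix.diagonal_mul_diagonal, Matrix.mul_assoc]
    refine (Matrix.inv_eq_left_inv ?_).symm
    rw [hmul, hΨΨ]
    calc U * Matrix.diagonal (fun i => ((σ i)⁻¹ * (σ i)⁻¹)) * Uᵀ *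
          (U * Matrix.diagonal (fun i => σ i ^ 2) * Uᵀ)
        = U * (Matrix.diagonal (fun i => ((σ i)⁻¹ * (σ i)⁻¹)) * ((Uᵀ * U) *
            (Matrix.diagonal (fun i => σ i ^ 2) * Uᵀ))) := by simp only [Matrix.mul_assoc]
      _ = U * ((Matrix.diagonal (fun i => ((σ i)⁻¹ * (σ i)⁻¹)) *
            Matrix.diagonal (fun i => σ i ^ 2)) * Uᵀ) := by
            rw [hU, Matrix.one_mul, Matrix.mul_assoc]
      _ = U * Uᵀ := by
            rw [Matrix.diagonal_mul_diagonal]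
            have : (fun i => (σ i)⁻¹ * (σ i)⁻¹ * σ i ^ 2) = fun _ => (1:ℝ) := by
              funext i; rw [← mul_inv, ← sq, inv_mul_cancel₀ (pow_ne_zero 2 (hσne i))]
            rw [this, Matrix.diagonal_one, Matrix.one_mul]
      _ = 1 := hUU
  have hReq : R = R₀ := by
    open scoped MatrixOrder in
    exact (CFC.sq_eq_sq_iff R R₀ hRpd.posSemidef.nonneg hR₀psd.nonneg).mp (by rw [sq, sq, hR, hR₀sq])
  -- W = diagonal σ⁻¹ * (S * Vᵀ)
  have hsum : ∀ (i : Fin m) (j : Fin M), (S * Vᵀ) i j = σ i * V j (κ i) := by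
    intro i j
    simp only [Matrix.mul_apply, Matrix.transpose_apply]
    rw [Finset.sum_eq_single (κ i) (fun k _ hk => by rw [hSz i k hk, zero_mul]) (by simp)]
  have hWeq : W = Matrix.diagonal (fun i => (σ i)⁻¹) * (S * Vᵀ) := by
    ext i j
    rw [Matrix.diagonal_mul, hsum, hW, ← mul_assoc, inv_mul_cancel₀ (hσne i), one_mul]
  have part1 : U * W = R * Ψ := by
    rw [hReq, hR₀, hSVD, hWeq]
    calc U * (Matrix.diagonal (fun i => (σ i)⁻¹) * (S * Vᵀ))
        = U * (Matrix.diagonal (fun i => (σ i)⁻¹) * ((Uᵀ * U) * (S * Vᵀ))) := by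
          rw [hU, Matrix.one_mul]
      _ = U * Matrix.diagonal (fun i => (σ i)⁻¹) * Uᵀ * (U * S * Vᵀ) := by
          simp only [Matrix.mul_assoc]
  -- part 2
  have hUWUW : (U * W) * (U * W)ᵀ = 1 := by
    rw [Matrix.transpose_mul]
    calc U * W * (Wᵀ * Uᵀ) = U * ((W * Wᵀ) * Uᵀ) := by simp only [Matrix.mul_assoc]
      _ = 1 := by rw [hWW, Matrix.one_mul, hUU]
  have part2 : (Real.sqrt α • (U * W)) * (Real.sqrt α • (U * W))ᵀ =
      α • (1 : Matrix (Fin m) (Fin m) ℝ) := by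
    rw [Matrix.transpose_smul, Matrix.smul_mul, Matrix.mul_smul, hUWUW, smul_smul,
      Real.mul_self_sqrt hα.le]
  refine ⟨by rw [part1], part2, ?_⟩
  -- part 3
  intro T hT
  have sum_sq_eq : ∀ B : Matrix (Fin m) (Fin M) ℝ, B * Bᵀ = α • 1 →
      ∑ i, ∑ j, (B i j) ^ 2 = α * m := by
    intro B hB
    have : ∀ i : Fin m, ∑ j, (B i j) ^ 2 = α := by
      intro i
      have := congrFun (congrFun hB i) i
      simp only [Matrix.mul_apply, Matrix.transpose_apply, Matrix.smul_apply,
        Matrix.one_apply_eq, smul_eq_mul, mul_one] at this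
      simpa [sq] using this
    simp [this, mul_comm]
  -- inner product identity
  have inner_eq : ∀ B : Matrix (Fin m) (Fin M) ℝ,
      ∑ i, ∑ j, Ψ i j * B i j = ∑ i, σ i * (Uᵀ * B * V) i (κ i) := by
    intro B
    have htr1 : ∑ i, ∑ j, Ψ i j * B i j = (Ψ * Bᵀ).trace := by
      simp [Matrix.trace, Matrix.mul_apply, Matrix.diag]
    have htr2 : (Ψ * Bᵀ).trace = (S * (Uᵀ * B * V)ᵀ).trace := by
      rw [hSVD]
      have : U * S * Vᵀ * Bᵀ = U * (S * (Vᵀ * Bᵀ)) := by simp only [Matrix.mul_assoc]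
      rw [this, Matrix.trace_mul_comm]
      congr 1
      rw [Matrix.transpose_mul, Matrix.transpose_mul, Matrix.transpose_transpose]
      simp only [Matrix.mul_assoc]
    rw [htr1, htr2]
    simp only [Matrix.trace, Matrix.diag, Matrix.mul_apply, Matrix.transpose_apply]
    apply Finset.sum_congr rfl
    intro i _
    rw [Finset.sum_eq_single (κ i) (fun k _ hk => by rw [hSz i k hk, zero_mul]) (by simp)]
  -- expansion of the squared Frobenius distance
  have expand : ∀ B : Matrix (Fin m) (Fin M) ℝ,
      ∑ i, ∑ j, ((Ψ - B) i j) ^ 2 =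
      (∑ i, ∑ j, (Ψ i j) ^ 2) - 2 * (∑ i, ∑ j, Ψ i j * B i j) + ∑ i, ∑ j, (B i j) ^ 2 := by
    intro B
    have : ∀ i j, ((Ψ - B) i j) ^ 2 = (Ψ i j) ^ 2 - 2 * (Ψ i j * B i j) + (B i j) ^ 2 := by
      intro i j; simp only [Matrix.sub_apply]; ring
    simp only [this, Finset.sum_add_distrib, Finset.sum_sub_distrib, Finset.mul_sum]
  set T₀ : Matrix (Fin m) (Fin M) ℝ := Real.sqrt α • (U * W) with hT₀
  -- inner product with T₀
  have hZ₀ : Uᵀ * T₀ * V = Real.sqrt α • (W * V) := by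
    rw [hT₀, Matrix.mul_smul, Matrix.smul_mul]
    congr 1
    calc Uᵀ * (U * W) * V = (Uᵀ * U) * (W * V) := by simp only [Matrix.mul_assoc]
      _ = W * V := by rw [hU, Matrix.one_mul]
  have hWV : ∀ i : Fin m, (W * V) i (κ i) = 1 := by
    intro i
    have hvv := congrFun (congrFun hV (κ i)) (κ i)
    simp only [Matrix.mul_apply, Matrix.transpose_apply, Matrix.one_apply_eq] at hvv
    simp only [Matrix.mul_apply, hW]
    rw [← hvv]
  have innerT₀ : ∑ i, ∑ j, Ψ i j * T₀ i j = ∑ i, σ i * Real.sqrt α := by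
    rw [inner_eq T₀]
    apply Finset.sum_congr rfl
    intro i _
    rw [hZ₀]
    simp [hWV i]
  -- bound for general T
  have innerT_le : ∑ i, ∑ j, Ψ i j * T i j ≤ ∑ i, σ i * Real.sqrt α := by
    rw [inner_eq T]
    apply Finset.sum_le_sum
    intro i _
    set Z := Uᵀ * T * V with hZ
    have hZZ : Z * Zᵀ = α • 1 := by
      rw [hZ, Matrix.transpose_mul, Matrix.transpose_mul, Matrix.transpose_transpose]
      calc Uᵀ * T * V * (Vᵀ * (Tᵀ * U)) = Uᵀ * (T * ((V * Vᵀ) * (Tᵀ * U))) := by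
            simp only [Matrix.mul_assoc]
        _ = Uᵀ * ((T * Tᵀ) * U) := by rw [hVV, Matrix.one_mul, Matrix.mul_assoc]
        _ = α • (Uᵀ * U) := by rw [hT, Matrix.smul_mul, Matrix.mul_smul, Matrix.one_mul]
        _ = α • 1 := by rw [hU]
    have hrow : ∑ j, (Z i j) ^ 2 = α := by
      have := congrFun (congrFun hZZ i) i
      simp only [Matrix.mul_apply, Matrix.transpose_apply, Matrix.smul_apply,
        Matrix.one_apply_eq, smul_eq_mul, mul_one] at this
      simpa [sq] using this
    have hle : (Z i (κ i)) ^ 2 ≤ α := by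
      rw [← hrow]
      exact Finset.single_le_sum (f := fun j => (Z i j) ^ 2)
        (fun j _ => sq_nonneg _) (Finset.mem_univ _)
    have hzle : Z i (κ i) ≤ Real.sqrt α :=
      calc Z i (κ i) ≤ |Z i (κ i)| := le_abs_self _
        _ = Real.sqrt ((Z i (κ i)) ^ 2) := (Real.sqrt_sq_eq_abs _).symm
        _ ≤ Real.sqrt α := Real.sqrt_le_sqrt hle
    exact mul_le_mul_of_nonneg_left hzle (hσ i).le
  -- conclude
  have hmono : ∑ i, ∑ j, ((Ψ - T₀) i j) ^ 2 ≤ ∑ i, ∑ j, ((Ψ - T) i j) ^ 2 := by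
    rw [expand T₀, expand T, sum_sq_eq T₀ part2, sum_sq_eq T hT, innerT₀]
    linarith [innerT_le]
  exact Real.sqrt_le_sqrt hmono
end
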